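/- Let a, b > 1 be real numbers and let p be a complex number with Re(p) > 0. For y ≥ 0 let n(y) denote the number of positive integers n satisfying (n+a)(n+b) ≤ e^y, which equals max(⌊(−(a+b) + √((a−b)^2 + 4e^y))/2⌋, 0). Then for every complex z with |z| < 1, Φ_{p,p}(a,b;z) = (1+a)^p (1+b)^p ( z/(1−z) + (p z/(z−1)) ∫_0^∞ e^{−p y} z^{n(y)} dy ). -/

import Mathlib

open MeasureTheory

/-- The generalized polylogarithm `Φ_{p,q}(a,b;z)`. -/
noncomputable def genPolylog (p q : ℂ) (a b : ℝ) (z : ℂ) : ℂ :=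
  ∑' k : ℕ, (((1 + a : ℝ) : ℂ) ^ p * ((1 + b : ℝ) : ℂ) ^ q /
      ((((k : ℝ) + 1 + a : ℝ) : ℂ) ^ p * (((k : ℝ) + 1 + b : ℝ) : ℂ) ^ q)) * z ^ (k + 1)

/-- `nCount y` is the number of positive integers `n` with `(n+a)(n+b) ≤ e^y`. -/
noncomputable def nCount (a b : ℝ) (y : ℝ) : ℕ :=
  Set.ncard {n : ℕ | 0 < n ∧ ((n : ℝ) + a) * ((n : ℝ) + b) ≤ Real.exp y}

namespace GPaux

/-- the breakpoints -/
noncomputable def Y (a b : ℝ) : ℕ → ℝ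
  | 0 => 0
  | (n+1) => Real.log ((((n:ℝ)+1) + a) * (((n:ℝ)+1) + b))

lemma ncard_interval (N : ℕ) : Set.ncard {m : ℕ | 0 < m ∧ m ≤ N} = N := by
  have h : {m : ℕ | 0 < m ∧ m ≤ N} = ↑(Finset.Icc 1 N) := by
    ext m; simp [Nat.succ_le_iff]
  rw [h, Set.ncard_coe_finset, Nat.card_Icc]
  omega

variable {a b : ℝ} (ha : 1 < a) (hb : 1 < b)
include ha hb

lemma Epos (n : ℕ) (hn : 0 < n) : (0:ℝ) < ((n:ℝ) + a) * ((n:ℝ) + b) := by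
  have : (1:ℝ) ≤ n := by exact_mod_cast hn
  nlinarith

lemma exp_Y (n : ℕ) (hn : 0 < n) :
    Real.exp (Y a b n) = ((n:ℝ) + a) * ((n:ℝ) + b) := by
  obtain ⟨m, rfl⟩ := Nat.exists_eq_succ_of_ne_zero hn.ne'
  have := Epos (a := a) (b := b) ha hb (m+1) (Nat.succ_pos m)
  simp only [Y, Nat.succ_eq_add_one]
  push_cast at this ⊢
  exact Real.exp_log this

lemma Y_strictMono : StrictMono (Y a b) := by
  apply strictMono_nat_of_lt_succ
  intro n
  cases n with
  | zero =>
    have : (1:ℝ) < ((0:ℝ)+1+a) * ((0:ℝ)+1+b) := by nlinarith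
    simpa [Y] using Real.log_pos this
  | succ m =>
    apply Real.log_lt_log
    · have := Epos (a := a) (b := b) ha hb (m+1) (Nat.succ_pos m)
      push_cast at this ⊢; linarith
    · push_cast; nlinarith [Nat.cast_nonneg (α := ℝ) m]

lemma Y_nonneg (n : ℕ) : 0 ≤ Y a b n := by
  have h0 : Y a b 0 = 0 := rfl
  have := (Y_strictMono ha hb).monotone (Nat.zero_le n)
  rw [h0] at this; exact this

lemma log_le_Y (n : ℕ) : Real.log n ≤ Y a b n := by
  cases n with
  | zero => simp [Y]
  | succ m =>
    have hn : (0:ℝ) < (m:ℝ)+1 := by positivity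
    simp only [Y, Nat.succ_eq_add_one]
    push_cast
    apply Real.log_le_log hn
    have : (0:ℝ) ≤ (m:ℝ) := Nat.cast_nonneg m
    nlinarith

/-- membership characterization via Y -/
lemma mem_iff_Y (t : ℝ) (m : ℕ) (hm : 0 < m) :
    ((m:ℝ) + a) * ((m:ℝ) + b) ≤ Real.exp t ↔ Y a b m ≤ t := by
  rw [← exp_Y ha hb m hm, Real.exp_le_exp]

lemma covering (t : ℝ) (ht : 0 ≤ t) :
    ∃ n, Y a b n ≤ t ∧ t < Y a b (n+1) := by
  have hne : ∃ n, t < Y a b n := by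
    refine ⟨⌊Real.exp t⌋₊ + 1, lt_of_lt_of_le ?_ (log_le_Y ha hb _)⟩
    have h1 : Real.exp t < (⌊Real.exp t⌋₊ + 1 : ℝ) := Nat.lt_floor_add_one _
    have := Real.log_lt_log (Real.exp_pos t) h1
    rw [Real.log_exp] at this
    exact_mod_cast this
  classical
  let n₀ := Nat.find hne
  have hn₀ : t < Y a b n₀ := Nat.find_spec hne
  have hn₀ne : n₀ ≠ 0 := by
    intro h
    rw [h] at hn₀
    simp only [Y] at hn₀; linarith
  obtain ⟨m, hm⟩ := Nat.exists_eq_succ_of_ne_zero hn₀ne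
  refine ⟨m, ?_, by rw [show m + 1 = n₀ from hm.symm]; exact hn₀⟩
  have := Nat.find_min hne (m := m) (by omega)
  linarith [not_lt.mp this]

lemma nCount_eq (n : ℕ) (t : ℝ) (h1 : Y a b n ≤ t) (h2 : t < Y a b (n+1)) :
    nCount a b t = n := by
  have hset : {m : ℕ | 0 < m ∧ ((m:ℝ) + a) * ((m:ℝ) + b) ≤ Real.exp t}
      = {m : ℕ | 0 < m ∧ m ≤ n} := by
    ext m
    simp only [Set.mem_setOf_eq, and_congr_right_iff]
    intro hm
    rw [mem_iff_Y ha hb t m hm]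
    constructor
    · intro h
      by_contra hc
      have : n + 1 ≤ m := by omega
      have := (Y_strictMono (a := a) (b := b) ha hb).monotone this
      linarith
    · intro h
      exact le_trans ((Y_strictMono (a := a) (b := b) ha hb).monotone h) h1
  rw [nCount, hset, ncard_interval]

lemma nCount_formula (t : ℝ) :
    nCount a b t =
      (⌊(-(a + b) + Real.sqrt ((a - b) ^ 2 + 4 * Real.exp t)) / 2⌋).toNat := by
  set r := (-(a + b) + Real.sqrt ((a - b) ^ 2 + 4 * Real.exp t)) / 2 with hr
  set N := (⌊r⌋).toNat with hN
  have key : ∀ m : ℕ, 0 < m →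
      (((m:ℝ) + a) * ((m:ℝ) + b) ≤ Real.exp t ↔ (m:ℝ) ≤ r) := by
    intro m hm
    have hm1 : (1:ℝ) ≤ m := by exact_mod_cast hm
    have hs : (0:ℝ) ≤ (a - b) ^ 2 + 4 * Real.exp t := by positivity
    have h2 : ((m:ℝ) ≤ r ↔ 2*(m:ℝ) + (a+b) ≤ Real.sqrt ((a - b) ^ 2 + 4 * Real.exp t)) := by
      rw [hr]; constructor <;> intro h <;> linarith
    rw [h2, Real.le_sqrt (by nlinarith) hs]
    constructor <;> intro h <;> nlinarith
  have hset : {m : ℕ | 0 < m ∧ ((m:ℝ) + a) * ((m:ℝ) + b) ≤ Real.exp t}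
      = {m : ℕ | 0 < m ∧ m ≤ N} := by
    ext m
    simp only [Set.mem_setOf_eq, and_congr_right_iff]
    intro hm
    rw [key m hm]
    constructor
    · intro h
      have : (m:ℤ) ≤ ⌊r⌋ := Int.le_floor.mpr (by exact_mod_cast h)
      omega
    · intro h
      have h0 : 0 ≤ ⌊r⌋ := by omega
      have : (m:ℤ) ≤ ⌊r⌋ := by omega
      calc (m:ℝ) ≤ (⌊r⌋ : ℝ) := by exact_mod_cast this
        _ ≤ r := Int.floor_le r
  rw [nCount, hset, ncard_interval]

lemma nCount_mono : Monotone (nCount a b) := by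
  intro s t hst
  apply Set.ncard_le_ncard
  · intro m hm
    exact ⟨hm.1, le_trans hm.2 (Real.exp_le_exp.mpr hst)⟩
  · -- finiteness
    apply Set.Finite.subset (Set.finite_Iic ⌈Real.exp t⌉₊)
    intro m hm
    simp only [Set.mem_Iic]
    have hm1 : (1:ℝ) ≤ m := by exact_mod_cast hm.1
    have : (m:ℝ) ≤ Real.exp t := by nlinarith [hm.2]
    exact_mod_cast le_trans this (Nat.le_ceil _)

end GPaux

open GPaux in
theorem generalized_polylog_single_integral_p_eq_q
    (a b : ℝ) (ha : 1 < a) (hb : 1 < b)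
    (p : ℂ) (hp : 0 < p.re) :
    (∀ y : ℝ, 0 ≤ y →
        nCount a b y =
          (⌊(-(a + b) + Real.sqrt ((a - b) ^ 2 + 4 * Real.exp y)) / 2⌋).toNat) ∧
    ∀ z : ℂ, ‖z‖ < 1 →
      genPolylog p p a b z =
        ((1 + a : ℝ) : ℂ) ^ p * ((1 + b : ℝ) : ℂ) ^ p *
          (z / (1 - z) +
            (p * z / (z - 1)) *
              ∫ y in Set.Ioi (0 : ℝ), Complex.exp (-(p * (y : ℂ))) * z ^ (nCount a b y)) := by
  constructor
  · intro y _; exact nCount_formula ha hb y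
  intro z hz
  -- notation
  have hp0 : p ≠ 0 := fun h => by simp [h] at hp
  have hz1 : (1:ℂ) - z ≠ 0 := by
    intro hc
    have : z = 1 := by linear_combination -hc
    simp [this] at hz
  have hz1' : z - 1 ≠ 0 := fun hc => hz1 (by linear_combination -hc)
  set W : ℕ → ℂ := fun n => Complex.exp (-(p * ((Y a b n : ℝ) : ℂ))) with hW
  have hW0 : W 0 = 1 := by simp [hW, Y]
  -- norm bounds
  have hWnorm : ∀ n, ‖W n‖ ≤ 1 := by
    intro n
    have h1 : ‖W n‖ = Real.exp (-(p.re * Y a b n)) := by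
      simp [hW, Complex.norm_exp, Complex.mul_re]
    rw [h1]
    rw [Real.exp_le_one_iff]
    have := Y_nonneg ha hb n
    nlinarith
  have hzn : ‖z‖ < 1 := hz
  have hzn0 : (0:ℝ) ≤ ‖z‖ := norm_nonneg z
  have hgeom : Summable (fun n : ℕ => ‖z‖ ^ n) := summable_geometric_of_lt_one hzn0 hzn
  have hA : Summable (fun n : ℕ => z ^ n * W n) := by
    apply Summable.of_norm_bounded hgeom
    intro n
    rw [norm_mul, norm_pow]
    calc ‖z‖ ^ n * ‖W n‖ ≤ ‖z‖ ^ n * 1 := by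
          exact mul_le_mul_of_nonneg_left (hWnorm n) (by positivity)
      _ = ‖z‖ ^ n := mul_one _
  have hB : Summable (fun n : ℕ => z ^ n * W (n + 1)) := by
    apply Summable.of_norm_bounded hgeom
    intro n
    rw [norm_mul, norm_pow]
    calc ‖z‖ ^ n * ‖W (n+1)‖ ≤ ‖z‖ ^ n * 1 := by
          exact mul_le_mul_of_nonneg_left (hWnorm (n+1)) (by positivity)
      _ = ‖z‖ ^ n := mul_one _
  set U : ℂ := ∑' n : ℕ, z ^ n * W (n + 1) with hU
  set f : ℝ → ℂ := fun y => Complex.exp (-(p * (y : ℂ))) * z ^ (nCount a b y) with hf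
  -- measurability
  have hmeas : Measurable f := by
    apply Measurable.mul
    · exact Complex.measurable_exp.comp
        ((measurable_const.mul Complex.measurable_ofReal).neg)
    · exact measurable_from_top.comp (nCount_mono ha hb).measurable
  -- pointwise norm bound
  have hbound : ∀ y : ℝ, ‖f y‖ ≤ Real.exp (-p.re * y) := by
    intro y
    rw [hf]
    simp only [norm_mul, norm_pow]
    have h1 : ‖Complex.exp (-(p * (y : ℂ)))‖ = Real.exp (-p.re * y) := by
      simp [Complex.norm_exp, Complex.mul_re]
    rw [h1]
    calc Real.exp (-p.re * y) * ‖z‖ ^ (nCount a b y)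
        ≤ Real.exp (-p.re * y) * 1 := by
          apply mul_le_mul_of_nonneg_left _ (Real.exp_nonneg _)
          exact pow_le_one₀ hzn0 hzn.le
      _ = _ := mul_one _
  have hIntIoi : IntegrableOn f (Set.Ioi (0:ℝ)) := by
    apply Integrable.mono' ((exp_neg_integrableOn_Ioi 0 hp))
    · exact (hmeas.aestronglyMeasurable).restrict
    · exact Filter.Eventually.of_forall hbound
  have hIntIci : IntegrableOn f (Set.Ici (0:ℝ)) :=
    (integrableOn_Ici_iff_integrableOn_Ioi).mpr hIntIoi
  -- union decomposition
  have hUnion : Set.Ici (0:ℝ) = ⋃ n : ℕ, Set.Ico (Y a b n) (Y a b (n+1)) := by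
    ext t
    simp only [Set.mem_Ici, Set.mem_iUnion, Set.mem_Ico]
    constructor
    · intro ht
      obtain ⟨n, h1, h2⟩ := covering ha hb t ht
      exact ⟨n, h1, h2⟩
    · rintro ⟨n, h1, _⟩
      exact le_trans (Y_nonneg ha hb n) h1
  have hdisj : Pairwise (Function.onFun Disjoint fun n : ℕ => Set.Ico (Y a b n) (Y a b (n+1))) := by
    intro i j hij
    simp only [Function.onFun]
    rw [Set.Ico_disjoint_Ico]
    rcases lt_or_gt_of_ne hij with h | h
    · have : Y a b (i+1) ≤ Y a b j := (Y_strictMono ha hb).monotone h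
      calc min (Y a b (i+1)) (Y a b (j+1)) ≤ Y a b (i+1) := min_le_left _ _
        _ ≤ Y a b j := this
        _ ≤ max (Y a b i) (Y a b j) := le_max_right _ _
    · have : Y a b (j+1) ≤ Y a b i := (Y_strictMono ha hb).monotone h
      calc min (Y a b (i+1)) (Y a b (j+1)) ≤ Y a b (j+1) := min_le_right _ _
        _ ≤ Y a b i := this
        _ ≤ max (Y a b i) (Y a b j) := le_max_left _ _
  -- piece integrals
  have hpiece : ∀ n : ℕ, ∫ y in Set.Ico (Y a b n) (Y a b (n+1)), f y
      = z ^ n * ((W n - W (n+1)) / p) := by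
    intro n
    have hle : Y a b n ≤ Y a b (n+1) := ((Y_strictMono ha hb) (Nat.lt_succ_self n)).le
    have hcongr : ∫ y in Set.Ico (Y a b n) (Y a b (n+1)), f y
        = ∫ y in Set.Ico (Y a b n) (Y a b (n+1)),
            Complex.exp (-(p * (y : ℂ))) * z ^ n := by
      apply setIntegral_congr_fun measurableSet_Ico
      intro t ht
      simp only [hf]
      rw [nCount_eq ha hb n t ht.1 ht.2]
    rw [hcongr, integral_mul_const]
    have hexp : ∀ y : ℝ, Complex.exp (-(p * (y:ℂ))) = Complex.exp ((-p) * (y:ℂ)) := by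
      intro y; ring_nf
    simp only [hexp]
    rw [integral_Ico_eq_integral_Ioo, ← integral_Ioc_eq_integral_Ioo,
      ← intervalIntegral.integral_of_le hle,
      integral_exp_mul_complex (neg_ne_zero.mpr hp0)]
    have hW1 : Complex.exp (-p * ((Y a b (n+1) : ℝ) : ℂ)) = W (n+1) := by
      rw [hW]; ring_nf
    have hW2 : Complex.exp (-p * ((Y a b n : ℝ) : ℂ)) = W n := by
      rw [hW]; ring_nf
    rw [hW1, hW2]
    rw [div_neg, ← neg_div, neg_sub]
    ring
  -- integral value
  have hIval : ∫ y in Set.Ioi (0:ℝ), f y = ((1 + z * U) - U) / p := by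
    have h1 : ∫ y in Set.Ioi (0:ℝ), f y = ∫ y in Set.Ici (0:ℝ), f y :=
      (integral_Ici_eq_integral_Ioi).symm
    rw [h1, hUnion, integral_iUnion (fun n => measurableSet_Ico) hdisj
      (by rw [← hUnion]; exact hIntIci)]
    simp only [hpiece]
    have hterm : ∀ n : ℕ, z ^ n * ((W n - W (n+1)) / p)
        = (z ^ n * W n - z ^ n * W (n+1)) * p⁻¹ := by
      intro n; field_simp
    simp only [hterm]
    rw [tsum_mul_right, Summable.tsum_sub hA hB]
    have hAval : ∑' n : ℕ, z ^ n * W n = 1 + z * U := by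
      rw [Summable.tsum_eq_zero_add hA]
      simp only [pow_zero, one_mul, hW0]
      congr 1
      have : ∀ n : ℕ, z ^ (n+1) * W (n+1) = z * (z ^ n * W (n+1)) := by
        intro n; ring
      simp only [this]
      rw [tsum_mul_left]
    rw [hAval, hU]
    field_simp
  -- genPolylog value
  set C : ℂ := ((1 + a : ℝ) : ℂ) ^ p * ((1 + b : ℝ) : ℂ) ^ p with hC
  have hPhi : genPolylog p p a b z = C * (z * U) := by
    have hterm : ∀ k : ℕ,
        (((1 + a : ℝ) : ℂ) ^ p * ((1 + b : ℝ) : ℂ) ^ p /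
          ((((k : ℝ) + 1 + a : ℝ) : ℂ) ^ p * (((k : ℝ) + 1 + b : ℝ) : ℂ) ^ p)) * z ^ (k + 1)
        = C * (z * (z ^ k * W (k+1))) := by
      intro k
      have hxpos : (0:ℝ) < (k:ℝ) + 1 + a := by positivity
      have hypos : (0:ℝ) < (k:ℝ) + 1 + b := by positivity
      have hxc : ((((k:ℝ) + 1 + a : ℝ)) : ℂ) ≠ 0 := by
        exact_mod_cast hxpos.ne'
      have hyc : ((((k:ℝ) + 1 + b : ℝ)) : ℂ) ≠ 0 := by
        exact_mod_cast hypos.ne'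
      have hYe : Y a b (k+1) = Real.log ((k:ℝ) + 1 + a) + Real.log ((k:ℝ) + 1 + b) := by
        show Real.log _ = _
        rw [Real.log_mul hxpos.ne' hypos.ne']
      have hWe : W (k+1) = (((((k:ℝ) + 1 + a : ℝ)) : ℂ) ^ p * ((((k:ℝ) + 1 + b : ℝ)) : ℂ) ^ p)⁻¹ := by
        rw [hW]
        simp only [hYe]
        rw [Complex.cpow_def_of_ne_zero hxc, Complex.cpow_def_of_ne_zero hyc,
          ← Complex.ofReal_log hxpos.le, ← Complex.ofReal_log hypos.le,
          ← Complex.exp_add, ← Complex.exp_neg]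
        congr 1
        push_cast
        ring
      rw [hWe, hC]
      rw [div_eq_mul_inv]
      ring
    rw [genPolylog]
    rw [tsum_congr hterm, tsum_mul_left, tsum_mul_left]
  -- final algebra
  rw [hPhi, hIval]
  have : p * z / (z - 1) * (((1 + z * U) - U) / p) = z / (z - 1) * ((1 + z * U) - U) := by
    field_simp
  rw [this]
  field_simp
  ring
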